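/- Let A = [a_ij] be an n×n real symmetric positive semidefinite matrix all of whose diagonal entries a_ii are positive, and let X be an n×n real symmetric positive definite matrix. Then the Hadamard product A ∘ X is positive definite. -/

import Mathlib

open Matrix

/-- If `A` is real symmetric positive semidefinite with positive diagonal entries and `X`
is real symmetric positive definite, then the Hadamard product `A ⊙ X` is positive
definite. -/
theorem hadamard_posDef {n : ℕ} (A X : Matrix (Fin n) (Fin n) ℝ)
    (hA : A.PosSemidef) (hAdiag : ∀ i, 0 < A i i) (hX : X.PosDef) :
    (A ⊙ X).PosDef := by
  obtain ⟨B, hB⟩ : ∃ B : Matrix (Fin n) (Fin n) ℝ, A = Bᴴ * B := by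
    open scoped MatrixOrder Matrix.Norms.L2Operator in
    obtain ⟨B, hB⟩ := CStarAlgebra.nonneg_iff_eq_star_mul_self.mp hA.nonneg
    exact ⟨B, by rw [hB, star_eq_conjTranspose]⟩
  rw [posDef_iff_dotProduct_mulVec]
  constructor
  · ext i j
    have h1 : A j i = A i j := by
      have := congrFun (congrFun hA.1 i) j
      simpa using this
    have h2 : X j i = X i j := by
      have := congrFun (congrFun hX.1 i) j
      simpa using this
    simp [conjTranspose_apply, hadamard_apply, h1, h2]
  · intro x hx
    have key : star x ⬝ᵥ (A ⊙ X) *ᵥ x =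
        ∑ k, star (fun i => B k i * x i) ⬝ᵥ X *ᵥ (fun i => B k i * x i) := by
      simp only [dotProduct, mulVec, hadamard_apply, hB, conjTranspose_apply,
        Matrix.mul_apply, star_trivial, Finset.sum_mul, Finset.mul_sum]
      have : ∀ i : Fin n, ∑ j : Fin n, ∑ k : Fin n, x i * (B k i * B k j * X i j * x j)
          = ∑ k : Fin n, ∑ j : Fin n, x i * (B k i * B k j * X i j * x j) :=
        fun i => Finset.sum_comm
      simp only [this]
      rw [Finset.sum_comm]
      exact Finset.sum_congr rfl fun k _ => Finset.sum_congr rfl fun i _ =>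
        Finset.sum_congr rfl fun j _ => by ring
    rw [key]
    obtain ⟨i, hi⟩ := Function.ne_iff.mp hx
    have hAii := hAdiag i
    rw [hB] at hAii
    simp only [Matrix.mul_apply, conjTranspose_apply, star_trivial] at hAii
    have hk : ∃ k, B k i ≠ 0 := by
      by_contra h
      push_neg at h
      simp [h] at hAii
    obtain ⟨k, hk⟩ := hk
    apply Finset.sum_pos'
    · intro l _
      exact hX.posSemidef.dotProduct_mulVec_nonneg _
    · refine ⟨k, Finset.mem_univ _, hX.dotProduct_mulVec_pos ?_⟩
      intro h
      exact (mul_ne_zero hk hi) (congrFun h i)
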